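/- Let G be a trigraph containing a family of pairwise disjoint vertical sets connected by propagation gadgets, with every fence gadget of a vertical set satisfying the attachment rule in G (for each arc from V^j to V^{j'}, the vertex x^{j'} lies in the set X of the fence of V^j and y^{j'} lies in its set Y, and the propagation digraph D(G) records one vertex per vertical set and one arc per propagation gadget). Then in any partial 4-sequence from G, any contraction involving a pair of vertices of a vertical set V can only occur at a moment when, for every vertical set V' from which there is a directed path to V in D(G), the vertical pair of V' lies in a common part (i.e., has already been contracted, possibly by that very contraction). -/

import Mathlib

/-- A *trigraph*: a vertex set with disjoint sets of black edges and red edges. -/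
structure Trigraph (V : Type) where
  black : SimpleGraph V
  red : SimpleGraph V
  disj : ∀ u v : V, black.Adj u v → ¬ red.Adj u v

namespace Trigraph

variable {V W : Type}

/-- Adjacency in the total graph of a trigraph. -/
def TotAdj (G : Trigraph V) (u v : V) : Prop :=
  G.black.Adj u v ∨ G.red.Adj u v

theorem totAdj_symm (G : Trigraph V) {u v : V} (h : G.TotAdj u v) : G.TotAdj v u :=
  Or.imp (fun h' => h'.symm) (fun h' => h'.symm) h

/-- The trigraph associated with a partition (setoid) of the vertex set of `G`:
two distinct parts are joined by a black edge if every pair between them is a black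
edge of `G`, and by a red edge if some pair between them is (black or red) adjacent
but not every pair is a black edge. This is the trigraph obtained by contracting
every part of the partition. -/
def quot (G : Trigraph V) (P : Setoid V) : Trigraph (Quotient P) where
  black :=
    { Adj := fun XX YY => XX ≠ YY ∧
        ∀ a b : V, Quotient.mk P a = XX → Quotient.mk P b = YY → G.black.Adj a b
      symm := ⟨fun XX YY h => ⟨h.1.symm, fun a b ha hb => (h.2 b a hb ha).symm⟩⟩
      loopless := ⟨fun XX h => h.1 rfl⟩ }
  red :=
    { Adj := fun XX YY => XX ≠ YY ∧
        (¬ ∀ a b : V, Quotient.mk P a = XX → Quotient.mk P b = YY → G.black.Adj a b) ∧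
        ∃ a b : V, Quotient.mk P a = XX ∧ Quotient.mk P b = YY ∧ G.TotAdj a b
      symm := ⟨fun XX YY h => ⟨h.1.symm,
        fun hc => h.2.1 (fun a b ha hb => (hc b a hb ha).symm), by
          obtain ⟨a, b2, ha, hb, hab⟩ := h.2.2
          exact ⟨b2, a, hb, ha, totAdj_symm G hab⟩⟩⟩
      loopless := ⟨fun XX h => h.1 rfl⟩ }
  disj := fun XX YY hb hr => hr.2.1 hb.2

/-- The setoid obtained from `P` by merging the classes of `u` and `v`. -/
def mergeSetoid (P : Setoid V) (u v : V) : Setoid V where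
  r a b := P.r a b ∨ (P.r a u ∧ P.r v b) ∨ (P.r a v ∧ P.r u b)
  iseqv := by
    constructor
    · exact fun a => Or.inl (P.iseqv.refl a)
    · rintro a b (h | ⟨h1, h2⟩ | ⟨h1, h2⟩)
      · exact Or.inl (P.iseqv.symm h)
      · exact Or.inr (Or.inr ⟨P.iseqv.symm h2, P.iseqv.symm h1⟩)
      · exact Or.inr (Or.inl ⟨P.iseqv.symm h2, P.iseqv.symm h1⟩)
    · rintro a b c (h | ⟨h1, h2⟩ | ⟨h1, h2⟩) (g | ⟨g1, g2⟩ | ⟨g1, g2⟩)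
      · exact Or.inl (P.iseqv.trans h g)
      · exact Or.inr (Or.inl ⟨P.iseqv.trans h g1, g2⟩)
      · exact Or.inr (Or.inr ⟨P.iseqv.trans h g1, g2⟩)
      · exact Or.inr (Or.inl ⟨h1, P.iseqv.trans h2 g⟩)
      · exact Or.inl (P.iseqv.trans h1
          (P.iseqv.trans (P.iseqv.symm (P.iseqv.trans h2 g1)) g2))
      · exact Or.inl (P.iseqv.trans h1 g2)
      · exact Or.inr (Or.inr ⟨h1, P.iseqv.trans h2 g⟩)
      · exact Or.inl (P.iseqv.trans h1 g2)
      · exact Or.inl (P.iseqv.trans h1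
          (P.iseqv.trans (P.iseqv.symm (P.iseqv.trans h2 g1)) g2))

/-- `Q` is obtained from `P` by merging two distinct parts. -/
def MergeStep (P Q : Setoid V) : Prop :=
  ∃ u v : V, ¬ P.r u v ∧ Q = mergeSetoid P u v

/-- The trigraph `G` has red degree at most `d`. -/
def RedDegLE (G : Trigraph V) (d : ℕ) : Prop :=
  ∀ x : V, (G.red.neighborSet x).ncard ≤ d

/-- A partial contraction sequence, recorded as the list of successive partitions of
the vertex set: it starts at the discrete partition and each partition is obtained
from the previous one by merging two parts (i.e. by one contraction). -/
def IsPartialContractionSeq (L : List (Setoid V)) : Prop :=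
  L.head? = some ⊥ ∧ L.Chain' MergeStep

/-- A partial `d`-sequence of the trigraph `G`: a partial contraction sequence all of
whose associated trigraphs have red degree at most `d`. -/
def IsPartialSeq (G : Trigraph V) (d : ℕ) (L : List (Setoid V)) : Prop :=
  IsPartialContractionSeq L ∧ ∀ P ∈ L, (G.quot P).RedDegLE d

/-- A (complete) `d`-sequence of the trigraph `G`: a partial `d`-sequence ending at
the one-vertex trigraph, i.e. at the partition with a single part. -/
def IsSeq (G : Trigraph V) (d : ℕ) (L : List (Setoid V)) : Prop :=
  G.IsPartialSeq d L ∧ L.getLast? = some ⊤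

/-- `G` admits a `d`-sequence. -/
def HasSeq (G : Trigraph V) (d : ℕ) : Prop := ∃ L, G.IsSeq d L

/-- The twin-width of a trigraph: the least `d` such that it admits a `d`-sequence. -/
noncomputable def tww (G : Trigraph V) : ℕ := sInf {d | G.HasSeq d}

/-- The induced subtrigraph on a set of vertices. -/
def induce (G : Trigraph V) (W : Set V) : Trigraph W where
  black := SimpleGraph.induce W G.black
  red := SimpleGraph.induce W G.red
  disj := fun u v hb hr => G.disj u v hb hr

/-- An isomorphism of trigraphs: a vertex bijection preserving black edges, red
edges, and non-edges. -/
structure Iso (G : Trigraph V) (H : Trigraph W) where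
  toEquiv : V ≃ W
  black_iff : ∀ a b : V, H.black.Adj (toEquiv a) (toEquiv b) ↔ G.black.Adj a b
  red_iff : ∀ a b : V, H.red.Adj (toEquiv a) (toEquiv b) ↔ G.red.Adj a b

/-- A graph, viewed as a trigraph with no red edges. -/
def ofGraph (G : SimpleGraph V) : Trigraph V :=
  ⟨G, ⊥, fun _ _ _ h => h⟩

end Trigraph

open Trigraph

/-- The 12 vertices of a fence gadget with sides `a` (for `A = {a_1, …, a_6}`)
and `b` (for `B = {b_1, …, b_6}`), indexed by `Fin 6` (so `a 0` is `a_1`, …). -/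
def fenceSet {V : Type} (a b : Fin 6 → V) : Set V := Set.range a ∪ Set.range b

/-- The fence gadget with sides `a`, `b` is attached to the set `S` in the trigraph
`G` and satisfies the attachment rule there, with associated set `X`.
Its black edges are the two 6-cycles on `A` and on `B` together with the edge
`b_1 a_6`; its red edges are `a_i b_i` (`i ∈ [6]`) and `a_i b_{i+1}` (`i ∈ [5]`);
the 12 fence vertices form a connected component of the red graph of `G`; every
vertex of `A` has (black) neighborhood `X ∪ S` outside the fence, every vertex of
`B` has (black) neighborhood `X` outside the fence, and every vertex of `X` is
(black-)adjacent to all of `S`. -/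
structure FenceAttached {V : Type} (G : Trigraph V) (a b : Fin 6 → V)
    (S X : Set V) : Prop where
  a_inj : Function.Injective a
  b_inj : Function.Injective b
  ab_ne : ∀ i j : Fin 6, a i ≠ b j
  S_nonempty : S.Nonempty
  S_disj : ∀ z ∈ S, z ∉ fenceSet a b
  X_disj : ∀ z ∈ X, z ∉ fenceSet a b ∪ S
  black_aa : ∀ i j : Fin 6, G.black.Adj (a i) (a j) ↔ (j = i + 1 ∨ i = j + 1)
  black_bb : ∀ i j : Fin 6, G.black.Adj (b i) (b j) ↔ (j = i + 1 ∨ i = j + 1)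
  black_ab : ∀ i j : Fin 6, G.black.Adj (a i) (b j) ↔ (i = 5 ∧ j = 0)
  red_aa : ∀ i j : Fin 6, ¬ G.red.Adj (a i) (a j)
  red_bb : ∀ i j : Fin 6, ¬ G.red.Adj (b i) (b j)
  red_ab : ∀ i j : Fin 6, G.red.Adj (a i) (b j) ↔ (j = i ∨ (j : ℕ) = (i : ℕ) + 1)
  red_closed : ∀ x ∈ fenceSet a b, ∀ y : V, G.red.Adj x y → y ∈ fenceSet a b
  black_a_out : ∀ (i : Fin 6) (z : V), z ∉ fenceSet a b →
      (G.black.Adj (a i) z ↔ z ∈ X ∪ S)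
  black_b_out : ∀ (i : Fin 6) (z : V), z ∉ fenceSet a b →
      (G.black.Adj (b i) z ↔ z ∈ X)
  X_black_S : ∀ x ∈ X, ∀ z ∈ S, G.black.Adj x z

/-- The 14 vertices of a vertical set: the vertical pair `x, y` together with the
12 vertices of the fence gadget attached to `{x, y}`. -/
def verticalSet {V : Type} (x y : V) (a b : Fin 6 → V) : Set V :=
  {x, y} ∪ fenceSet a b

namespace WireProof

open Trigraph

/-! ### The decidable core on an abstract 14-element vertex set -/

abbrev W14 := (Fin 6 ⊕ Fin 6) ⊕ Bool

def gT : W14 → W14 → Bool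
  | .inl (.inl i), .inl (.inl j) => decide (j = i + 1 ∨ i = j + 1)
  | .inl (.inr i), .inl (.inr j) => decide (j = i + 1 ∨ i = j + 1)
  | .inl (.inl i), .inl (.inr j) =>
      decide ((i = 5 ∧ j = 0) ∨ j = i ∨ (j : ℕ) = (i : ℕ) + 1)
  | .inr _, .inl (.inl _) => true
  | _, _ => false

def gN : W14 → W14 → Bool
  | .inl (.inl i), .inl (.inl j) => decide (¬ (j = i + 1 ∨ i = j + 1))
  | .inl (.inr i), .inl (.inr j) => decide (¬ (j = i + 1 ∨ i = j + 1))
  | .inl (.inl i), .inl (.inr j) => decide (¬ (i = 5 ∧ j = 0))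
  | .inr _, .inl (.inr _) => true
  | _, _ => false

def wgood (f g w : W14) : Bool :=
  (gT f w || gT w f || gT g w || gT w g) && (gN f w || gN w f || gN g w || gN w g)

set_option maxRecDepth 10000 in
lemma key14 : ∀ f g : W14, f ≠ g →
    ¬ (f = Sum.inr false ∧ g = Sum.inr true) →
    ¬ (f = Sum.inr true ∧ g = Sum.inr false) →
    5 ≤ (Finset.univ.filter (fun w => w ≠ f ∧ w ≠ g ∧ wgood f g w = true)).card := by
  decide

lemma extract5 {f g : W14}
    (h : 5 ≤ (Finset.univ.filter (fun w => w ≠ f ∧ w ≠ g ∧ wgood f g w = true)).card) :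
    ∃ c : Fin 5 → W14, Function.Injective c ∧
      ∀ k, c k ≠ f ∧ c k ≠ g ∧ wgood f g (c k) = true := by
  obtain ⟨t, hts, htc⟩ := Finset.exists_subset_card_eq h
  let e := t.equivFinOfCardEq htc
  refine ⟨fun k => (e.symm k : W14), ?_, ?_⟩
  · intro k l hkl
    have : e.symm k = e.symm l := Subtype.ext hkl
    simpa using congrArg e this
  · intro k
    have := hts (e.symm k).2
    exact (Finset.mem_filter.mp this).2

/-! ### Generic counting lemmas -/

lemma five_le_ncard {α : Type} [Finite α] {s : Set α} (c : Fin 5 → α)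
    (hinj : Function.Injective c) (hmem : ∀ k, c k ∈ s) : 5 ≤ s.ncard := by
  have h1 : Set.range c ⊆ s := by rintro _ ⟨k, rfl⟩; exact hmem k
  have h2 : (Set.range c).ncard = 5 := by
    rw [← Set.image_univ, Set.ncard_image_of_injective _ hinj, Set.ncard_univ]
    simp
  calc 5 = (Set.range c).ncard := h2.symm
    _ ≤ s.ncard := Set.ncard_le_ncard h1 (Set.toFinite s)

/-- A red edge in the quotient trigraph between the class of `u` and the class of
`w`, witnessed by `p, p'` in the class of `u` with `p` totally adjacent to `w` and
`p'` not black-adjacent to `w`. -/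
lemma quot_red_adj {V : Type} (G : Trigraph V) (Q : Setoid V) {u w p p' : V}
    (h1 : Q.r p u) (h2 : Q.r p' u) (hne : ¬ Q.r u w)
    (htot : G.TotAdj p w) (hnb : ¬ G.black.Adj p' w) :
    (G.quot Q).red.Adj (Quotient.mk Q u) (Quotient.mk Q w) := by
  refine ⟨fun he => hne (Quotient.exact he), fun hall => hnb ?_, p, w, Quotient.sound h1, rfl, htot⟩
  exact hall p' w (Quotient.sound h2) rfl

end WireProof
namespace WireProof

open Trigraph

section OneFence

variable {V : Type} {G : Trigraph V} {x y : V} {a b : Fin 6 → V} {X : Set V}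

/-- The canonical enumeration of the 14 vertices of a vertical set. -/
def vmap (x y : V) (a b : Fin 6 → V) : W14 → V
  | .inl (.inl i) => a i
  | .inl (.inr i) => b i
  | .inr false => x
  | .inr true => y

variable (hxy : x ≠ y) (hF : FenceAttached G a b {x, y} X)

lemma x_mem_S : x ∈ ({x, y} : Set V) := Set.mem_insert _ _
lemma y_mem_S : y ∈ ({x, y} : Set V) := Set.mem_insert_of_mem _ rfl

lemma a_mem_fence (i : Fin 6) : a i ∈ fenceSet a b := Or.inl ⟨i, rfl⟩
lemma b_mem_fence (i : Fin 6) : b i ∈ fenceSet a b := Or.inr ⟨i, rfl⟩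

include hF

lemma x_not_fence : x ∉ fenceSet a b := hF.S_disj x (x_mem_S)
lemma y_not_fence : y ∉ fenceSet a b := hF.S_disj y (y_mem_S)

lemma x_not_X : x ∉ X := fun hx => hF.X_disj x hx (Or.inr (x_mem_S))
lemma y_not_X : y ∉ X := fun hy => hF.X_disj y hy (Or.inr (y_mem_S))

omit hF in
lemma vmap_mem (p : W14) : vmap x y a b p ∈ verticalSet x y a b := by
  rcases p with (i | i) | c
  · exact Or.inr (a_mem_fence (b := b) i)
  · exact Or.inr (b_mem_fence (a := a) i)
  · cases c
    · exact Or.inl (x_mem_S)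
    · exact Or.inl (y_mem_S)

omit hF in
lemma exists_vmap {z : V} (hz : z ∈ verticalSet x y a b) : ∃ p, z = vmap x y a b p := by
  rcases hz with (rfl | rfl) | (⟨i, rfl⟩ | ⟨i, rfl⟩)
  · exact ⟨.inr false, rfl⟩
  · exact ⟨.inr true, rfl⟩
  · exact ⟨.inl (.inl i), rfl⟩
  · exact ⟨.inl (.inr i), rfl⟩

include hxy

lemma vmap_inj : Function.Injective (vmap x y a b) := by
  have hax : ∀ i, a i ≠ x := fun i h => x_not_fence hF (h ▸ a_mem_fence (b := b) i)
  have hay : ∀ i, a i ≠ y := fun i h => y_not_fence hF (h ▸ a_mem_fence (b := b) i)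
  have hbx : ∀ i, b i ≠ x := fun i h => x_not_fence hF (h ▸ b_mem_fence (a := a) i)
  have hby : ∀ i, b i ≠ y := fun i h => y_not_fence hF (h ▸ b_mem_fence (a := a) i)
  rintro ((i | i) | c) ((j | j) | d) h <;>
    simp only [vmap] at h
  · exact congrArg _ (congrArg _ (hF.a_inj h))
  · exact absurd h (hF.ab_ne i j)
  · cases d
    · exact absurd h (hax i)
    · exact absurd h (hay i)
  · exact absurd h.symm (hF.ab_ne j i)
  · exact congrArg _ (congrArg _ (hF.b_inj h))
  · cases d
    · exact absurd h (hbx i)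
    · exact absurd h (hby i)
  · cases c
    · exact absurd h.symm (hax j)
    · exact absurd h.symm (hay j)
  · cases c
    · exact absurd h.symm (hbx j)
    · exact absurd h.symm (hby j)
  · cases c <;> cases d
    · rfl
    · exact absurd h hxy
    · exact absurd h.symm hxy
    · rfl

omit hxy

lemma gT_sound {p q : W14} (h : gT p q = true) :
    G.TotAdj (vmap x y a b p) (vmap x y a b q) := by
  rcases p with (i | i) | c <;> rcases q with (j | j) | d <;>
      simp only [gT, decide_eq_true_eq] at h <;>
      try exact absurd h (by decide)
  · exact Or.inl ((hF.black_aa i j).mpr h)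
  · rcases h with ⟨hi, hj⟩ | h
    · exact Or.inl ((hF.black_ab i j).mpr ⟨hi, hj⟩)
    · exact Or.inr ((hF.red_ab i j).mpr h)
  · exact Or.inl ((hF.black_bb i j).mpr h)
  · cases c
    · exact Or.inl (((hF.black_a_out j x (x_not_fence hF)).mpr (Or.inr (x_mem_S))).symm)
    · exact Or.inl (((hF.black_a_out j y (y_not_fence hF)).mpr (Or.inr (y_mem_S))).symm)

lemma gN_sound {p q : W14} (h : gN p q = true) :
    ¬ G.black.Adj (vmap x y a b p) (vmap x y a b q) := by
  rcases p with (i | i) | c <;> rcases q with (j | j) | d <;>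
      simp only [gN, decide_eq_true_eq] at h <;>
      try exact absurd h (by decide)
  · exact fun hB => h ((hF.black_aa i j).mp hB)
  · exact fun hB => h ((hF.black_ab i j).mp hB)
  · exact fun hB => h ((hF.black_bb i j).mp hB)
  · cases c
    · exact fun hB => x_not_X hF ((hF.black_b_out j x (x_not_fence hF)).mp hB.symm)
    · exact fun hB => y_not_X hF ((hF.black_b_out j y (y_not_fence hF)).mp hB.symm)

lemma tot_sound {p q : W14} (h : (gT p q || gT q p) = true) :
    G.TotAdj (vmap x y a b p) (vmap x y a b q) := by
  rcases Bool.or_eq_true_iff.mp h with h' | h'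
  · exact gT_sound hF h'
  · exact G.totAdj_symm (gT_sound hF h')

lemma nb_sound {p q : W14} (h : (gN p q || gN q p) = true) :
    ¬ G.black.Adj (vmap x y a b p) (vmap x y a b q) := by
  rcases Bool.or_eq_true_iff.mp h with h' | h'
  · exact gN_sound hF h'
  · exact fun hB => gN_sound hF h' hB.symm

end OneFence

end WireProof
namespace WireProof

open Trigraph

section OneFence

variable {V : Type} [Fintype V] {G : Trigraph V} {x y : V} {a b : Fin 6 → V} {X : Set V}

/-- The vertices of a vertical set lie in pairwise distinct parts. -/
def Untouched (x y : V) (a b : Fin 6 → V) (P : Setoid V) : Prop :=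
  ¬ ∃ f ∈ verticalSet x y a b, ∃ g ∈ verticalSet x y a b, f ≠ g ∧ P.r f g

lemma mergeSetoid_r {P : Setoid V} {u v p q : V} :
    (mergeSetoid P u v).r p q ↔
      P.r p q ∨ (P.r p u ∧ P.r v q) ∨ (P.r p v ∧ P.r u q) := Iff.rfl

lemma mergeSetoid_comm (P : Setoid V) (u v : V) :
    mergeSetoid P u v = mergeSetoid P v u := by
  apply Setoid.ext
  intro p q
  constructor <;> rintro (h | h | h)
  · exact Or.inl h
  · exact Or.inr (Or.inr h)
  · exact Or.inr (Or.inl h)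
  · exact Or.inl h
  · exact Or.inr (Or.inr h)
  · exact Or.inr (Or.inl h)

/-- Core of the fence lemma: if no two vertices of the vertical set are `P`-related,
and the contraction of `u, v` merges two distinct vertices `f, g` of the vertical
set, then keeping red degree at most `4` forces `{f, g} = {x, y}`. -/
lemma fence_first_touch (hxy : x ≠ y) (hF : FenceAttached G a b {x, y} X)
    {P : Setoid V} {u v : V} (huv : ¬ P.r u v)
    (hdeg : (G.quot (mergeSetoid P u v)).RedDegLE 4)
    (hT : Untouched x y a b P)
    {f g : V} (hf : f ∈ verticalSet x y a b) (hg : g ∈ verticalSet x y a b)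
    (hfu : P.r f u) (hgv : P.r g v) :
    (f = x ∧ g = y) ∨ (f = y ∧ g = x) := by
  by_contra hcon
  obtain ⟨pf, rfl⟩ := exists_vmap hf
  obtain ⟨pg, rfl⟩ := exists_vmap hg
  set Q := mergeSetoid P u v with hQdef
  have hvinj := vmap_inj hxy hF
  -- vertices of the vertical set in distinct parts, as a statement on indices
  have noT : ∀ p q : W14, p ≠ q → ¬ P.r (vmap x y a b p) (vmap x y a b q) := by
    intro p q hpq hr
    exact hT ⟨_, vmap_mem p, _, vmap_mem q, fun e => hpq (hvinj e), hr⟩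
  have hfg : pf ≠ pg := by
    rintro rfl
    exact huv (P.iseqv.trans (P.iseqv.symm hfu) hgv)
  have h1 : ¬ (pf = Sum.inr false ∧ pg = Sum.inr true) := by
    rintro ⟨rfl, rfl⟩
    exact hcon (Or.inl ⟨rfl, rfl⟩)
  have h2 : ¬ (pf = Sum.inr true ∧ pg = Sum.inr false) := by
    rintro ⟨rfl, rfl⟩
    exact hcon (Or.inr ⟨rfl, rfl⟩)
  obtain ⟨c, hcinj, hcprop⟩ := extract5 (key14 pf pg hfg h1 h2)
  -- the witnesses are not in the merged part
  have hwu : ∀ k, ¬ Q.r u (vmap x y a b (c k)) := by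
    intro k hk
    rcases hk with h | ⟨-, h⟩ | ⟨h', h⟩
    · exact noT pf (c k) (fun e => (hcprop k).1 e.symm) (P.iseqv.trans hfu h)
    · exact noT pg (c k) (fun e => (hcprop k).2.1 e.symm) (P.iseqv.trans hgv h)
    · exact huv h'
  -- distinct witnesses lie in distinct parts of `Q`
  have hdist : ∀ k l, k ≠ l → ¬ Q.r (vmap x y a b (c k)) (vmap x y a b (c l)) := by
    intro k l hkl hr
    rcases hr with h | ⟨h, -⟩ | ⟨h, -⟩
    · exact noT (c k) (c l) (fun e => hkl (hcinj e)) h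
    · exact noT (c k) pf (hcprop k).1 (P.iseqv.trans h (P.iseqv.symm hfu))
    · exact noT (c k) pg (hcprop k).2.1 (P.iseqv.trans h (P.iseqv.symm hgv))
  -- the classes of the witnesses are red neighbours of the merged class
  have hQfu : Q.r (vmap x y a b pf) u := Or.inl hfu
  have hQgu : Q.r (vmap x y a b pg) u := Or.inr (Or.inr ⟨hgv, P.iseqv.refl u⟩)
  have hmem : ∀ k, Quotient.mk Q (vmap x y a b (c k)) ∈
      (G.quot Q).red.neighborSet (Quotient.mk Q u) := by
    intro k
    have hgood := (hcprop k).2.2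
    simp only [wgood, Bool.and_eq_true, Bool.or_eq_true] at hgood
    obtain ⟨htot, hnb⟩ := hgood
    have htot' : G.TotAdj (vmap x y a b pf) (vmap x y a b (c k)) ∨
        G.TotAdj (vmap x y a b pg) (vmap x y a b (c k)) := by
      rcases htot with ((h | h) | h) | h
      · exact Or.inl (gT_sound hF h)
      · exact Or.inl (G.totAdj_symm (gT_sound hF h))
      · exact Or.inr (gT_sound hF h)
      · exact Or.inr (G.totAdj_symm (gT_sound hF h))
    have hnb' : ¬ G.black.Adj (vmap x y a b pf) (vmap x y a b (c k)) ∨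
        ¬ G.black.Adj (vmap x y a b pg) (vmap x y a b (c k)) := by
      rcases hnb with ((h | h) | h) | h
      · exact Or.inl (gN_sound hF h)
      · exact Or.inl (fun hB => gN_sound hF h hB.symm)
      · exact Or.inr (gN_sound hF h)
      · exact Or.inr (fun hB => gN_sound hF h hB.symm)
    rcases htot' with ht | ht <;> rcases hnb' with hn | hn
    · exact quot_red_adj G Q hQfu hQfu (hwu k) ht hn
    · exact quot_red_adj G Q hQfu hQgu (hwu k) ht hn
    · exact quot_red_adj G Q hQgu hQfu (hwu k) ht hn
    · exact quot_red_adj G Q hQgu hQgu (hwu k) ht hn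
  have hcinj' : Function.Injective
      (fun k => Quotient.mk Q (vmap x y a b (c k))) := by
    intro k l he
    by_contra hne
    exact hdist k l hne (Quotient.exact he)
  have h5 := five_le_ncard _ hcinj' hmem
  have h4 := hdeg (Quotient.mk Q u)
  omega

end OneFence

end WireProof
namespace WireProof

open Trigraph

section OneFence

variable {V : Type} [Fintype V] {G : Trigraph V} {x y : V} {a b : Fin 6 → V} {X : Set V}

/-- Propagation: if `x2 ∈ X`, `y2 ∈ Y`, no two vertices of the vertical set are
`P`-related, and the contraction of `u, v` merges (the parts of) `x2` and `y2`,
then the red degree of the merged part exceeds `4`. -/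
lemma fence_propagation (hxy : x ≠ y) (hF : FenceAttached G a b {x, y} X)
    {x2 y2 : V} (hx2 : x2 ∈ X) (hy2 : y2 ∉ fenceSet a b ∪ {x, y} ∪ X)
    {P : Setoid V} {u v : V} (huv : ¬ P.r u v)
    (hdeg : (G.quot (mergeSetoid P u v)).RedDegLE 4)
    (hT : Untouched x y a b P)
    (hxu : P.r x2 u) (hyv : P.r y2 v) : False := by
  set Q := mergeSetoid P u v with hQdef
  have hx2f : x2 ∉ fenceSet a b := fun h => hF.X_disj x2 hx2 (Or.inl h)
  have hy2f : y2 ∉ fenceSet a b := fun h => hy2 (Or.inl (Or.inl h))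
  have hy2S : y2 ∉ ({x, y} : Set V) := fun h => hy2 (Or.inl (Or.inr h))
  have hy2X : y2 ∉ X := fun h => hy2 (Or.inr h)
  have tot_x2 : ∀ w ∈ fenceSet a b, G.TotAdj x2 w := by
    rintro w (⟨l, rfl⟩ | ⟨l, rfl⟩)
    · exact Or.inl ((hF.black_a_out l x2 hx2f).mpr (Or.inl hx2)).symm
    · exact Or.inl ((hF.black_b_out l x2 hx2f).mpr hx2).symm
  have nb_y2 : ∀ w ∈ fenceSet a b, ¬ G.black.Adj y2 w := by
    rintro w (⟨l, rfl⟩ | ⟨l, rfl⟩) hB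
    · rcases (hF.black_a_out l y2 hy2f).mp hB.symm with h | h
      · exact hy2X h
      · exact hy2S h
    · exact hy2X ((hF.black_b_out l y2 hy2f).mp hB.symm)
  -- at most one fence vertex in the part of `u`, resp. of `v`
  have hbu : ∀ w ∈ fenceSet a b, ∀ w' ∈ fenceSet a b, w ≠ w' →
      P.r w u → P.r w' u → False := by
    intro w hw w' hw' hne h h'
    exact hT ⟨w, Or.inr hw, w', Or.inr hw', hne, P.iseqv.trans h (P.iseqv.symm h')⟩
  have hbv : ∀ w ∈ fenceSet a b, ∀ w' ∈ fenceSet a b, w ≠ w' →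
      P.r w v → P.r w' v → False := by
    intro w hw w' hw' hne h h'
    exact hT ⟨w, Or.inr hw, w', Or.inr hw', hne, P.iseqv.trans h (P.iseqv.symm h')⟩
  -- core counting argument, given five good fence witnesses
  have core : ∀ w : Fin 5 → V, (∀ k, w k ∈ fenceSet a b) → Function.Injective w →
      (∀ k, ¬ (P.r (w k) u ∨ P.r (w k) v)) → False := by
    intro w fmem winj wgood
    have hQxu : Q.r x2 u := Or.inl hxu
    have hQyu : Q.r y2 u := Or.inr (Or.inr ⟨hyv, P.iseqv.refl u⟩)
    have hwu : ∀ k, ¬ Q.r u (w k) := by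
      intro k hk
      rcases hk with h | ⟨-, h⟩ | ⟨h, -⟩
      · exact wgood k (Or.inl (P.iseqv.symm h))
      · exact wgood k (Or.inr (P.iseqv.symm h))
      · exact huv h
    have hdist : ∀ k l, k ≠ l → ¬ Q.r (w k) (w l) := by
      intro k l hkl hr
      rcases hr with h | ⟨h, -⟩ | ⟨h, -⟩
      · exact hT ⟨w k, Or.inr (fmem k), w l, Or.inr (fmem l),
          fun e => hkl (winj e), h⟩
      · exact wgood k (Or.inl h)
      · exact wgood k (Or.inr h)
    have hmem : ∀ k, Quotient.mk Q (w k) ∈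
        (G.quot Q).red.neighborSet (Quotient.mk Q u) := fun k =>
      quot_red_adj G Q hQxu hQyu (hwu k) (tot_x2 (w k) (fmem k)) (nb_y2 (w k) (fmem k))
    have hcinj' : Function.Injective (fun k => Quotient.mk Q (w k)) := by
      intro k l he
      by_contra hne
      exact hdist k l hne (Quotient.exact he)
    have h5 := five_le_ncard _ hcinj' hmem
    have h4 := hdeg (Quotient.mk Q u)
    omega
  by_cases hA : ∃ l1 l2 : Fin 6, l1 ≠ l2 ∧ (P.r (a l1) u ∨ P.r (a l1) v) ∧
      (P.r (a l2) u ∨ P.r (a l2) v)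
  · -- two bad `a`-vertices: all `b`-vertices are good
    obtain ⟨l1, l2, hl, hb1, hb2⟩ := hA
    have hane : a l1 ≠ a l2 := fun e => hl (hF.a_inj e)
    have allB : ∀ m : Fin 6, ¬ (P.r (b m) u ∨ P.r (b m) v) := by
      intro m hbm
      rcases hb1 with h1 | h1 <;> rcases hb2 with h2 | h2
      · exact hbu _ (a_mem_fence l1) _ (a_mem_fence l2) hane h1 h2
      · rcases hbm with hm | hm
        · exact hbu _ (b_mem_fence m) _ (a_mem_fence l1) (fun e => hF.ab_ne l1 m e.symm) hm h1
        · exact hbv _ (b_mem_fence m) _ (a_mem_fence l2) (fun e => hF.ab_ne l2 m e.symm) hm h2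
      · rcases hbm with hm | hm
        · exact hbu _ (b_mem_fence m) _ (a_mem_fence l2) (fun e => hF.ab_ne l2 m e.symm) hm h2
        · exact hbv _ (b_mem_fence m) _ (a_mem_fence l1) (fun e => hF.ab_ne l1 m e.symm) hm h1
      · exact hbv _ (a_mem_fence l1) _ (a_mem_fence l2) hane h1 h2
    exact core (fun k => b k.castSucc) (fun k => b_mem_fence _)
      (fun k l e => by
        have := hF.b_inj e
        exact Fin.castSucc_injective 5 this)
      (fun k => allB _)
  · -- at most one bad `a`-vertex
    push_neg at hA
    have hsel : ∃ l0 : Fin 6, ∀ l, l ≠ l0 → ¬ (P.r (a l) u ∨ P.r (a l) v) := by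
      by_cases hE : ∃ l, P.r (a l) u ∨ P.r (a l) v
      · obtain ⟨l0, hl0⟩ := hE
        refine ⟨l0, fun l hl hb => ?_⟩
        obtain ⟨h1, h2⟩ := hA l0 l (fun e => hl e.symm) hl0
        exact hb.elim h1 h2
      · push_neg at hE
        exact ⟨0, fun l _ hb => hb.elim (hE l).1 (hE l).2⟩
    obtain ⟨l0, hl0⟩ := hsel
    exact core (fun k => a (l0.succAbove k)) (fun k => a_mem_fence _)
      (fun k l e => Fin.succAbove_right_injective (hF.a_inj e))
      (fun k => hl0 _ (Fin.succAbove_ne l0 k))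

end OneFence

end WireProof
namespace WireProof

open Trigraph

section Family

variable {V ι : Type} [Fintype V] {G : Trigraph V}
  {x y : ι → V} {a b : ι → Fin 6 → V} {X : ι → Set V} {Arc : ι → ι → Prop}

/-- The invariant: whenever two distinct vertices of a vertical set `V^i` lie in a
common part of `P`, the vertical pair of every ancestor of `V^i` lies in a common
part of `P`. -/
def Inv (x y : ι → V) (a b : ι → Fin 6 → V) (Arc : ι → ι → Prop) (P : Setoid V) : Prop :=
  ∀ i, (∃ f ∈ verticalSet (x i) (y i) (a i) (b i),
        ∃ g ∈ verticalSet (x i) (y i) (a i) (b i), f ≠ g ∧ P.r f g) →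
    ∀ j, Relation.ReflTransGen Arc j i → P.r (x j) (y j)

variable (hxy : ∀ i, x i ≠ y i)
  (hF : ∀ i, FenceAttached G (a i) (b i) {x i, y i} (X i))
  (harc : ∀ i j, Arc i j → x j ∈ X i ∧
      y j ∉ fenceSet (a i) (b i) ∪ {x i, y i} ∪ X i)

include hxy hF harc

lemma inv_step {P : Setoid V} {u v : V} (huv : ¬ P.r u v)
    (hdeg : (G.quot (mergeSetoid P u v)).RedDegLE 4)
    (hI : Inv x y a b Arc P) : Inv x y a b Arc (mergeSetoid P u v) := by
  have main : ∀ (u' v' : V), ¬ P.r u' v' →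
      (G.quot (mergeSetoid P u' v')).RedDegLE 4 →
      ∀ i (f g : V), f ∈ verticalSet (x i) (y i) (a i) (b i) →
        g ∈ verticalSet (x i) (y i) (a i) (b i) →
        P.r f u' → P.r g v' →
      ∀ j, Relation.ReflTransGen Arc j i → (mergeSetoid P u' v').r (x j) (y j) := by
    intro u' v' huv' hdeg' i f g hf hg hfu hgv j hpath
    by_cases hT : Untouched (x i) (y i) (a i) (b i) P
    · -- the contraction newly touches `V^i`; it must merge `x i` with `y i`
      have hdeg'' : (G.quot (mergeSetoid P v' u')).RedDegLE 4 := by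
        rw [mergeSetoid_comm]; exact hdeg'
      have huv'' : ¬ P.r v' u' := fun h => huv' (P.iseqv.symm h)
      rcases fence_first_touch (hxy i) (hF i) huv' hdeg' hT hf hg hfu hgv with
        ⟨rfl, rfl⟩ | ⟨rfl, rfl⟩
      · -- `f = x i`, `g = y i`
        have hQxy : (mergeSetoid P u' v').r (x i) (y i) :=
          Or.inr (Or.inl ⟨hfu, P.iseqv.symm hgv⟩)
        rcases Relation.ReflTransGen.cases_tail hpath with heq2 | ⟨c, hjc, hci⟩
        · subst heq2; exact hQxy
        · have hTc : ¬ Untouched (x c) (y c) (a c) (b c) P := fun hU =>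
            fence_propagation (hxy c) (hF c) (harc c i hci).1 (harc c i hci).2
              huv' hdeg' hU hfu hgv
          simp only [Untouched, not_not] at hTc
          exact Or.inl (hI c hTc j hjc)
      · -- `f = y i`, `g = x i`
        have hQxy : (mergeSetoid P u' v').r (x i) (y i) :=
          (mergeSetoid P u' v').iseqv.symm (Or.inr (Or.inl ⟨hfu, P.iseqv.symm hgv⟩))
        rcases Relation.ReflTransGen.cases_tail hpath with heq2 | ⟨c, hjc, hci⟩
        · subst heq2; exact hQxy
        · have hTc : ¬ Untouched (x c) (y c) (a c) (b c) P := fun hU =>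
            fence_propagation (hxy c) (hF c) (harc c i hci).1 (harc c i hci).2
              huv'' hdeg'' hU hgv hfu
          simp only [Untouched, not_not] at hTc
          exact Or.inl (hI c hTc j hjc)
    · -- `V^i` was already touched in `P`
      simp only [Untouched, not_not] at hT
      have hfg : f ≠ g := by
        rintro rfl
        exact huv' (P.iseqv.trans (P.iseqv.symm hfu) hgv)
      exact Or.inl (hI i hT j hpath)
  intro i hTQ j hpath
  obtain ⟨f, hf, g, hg, hfg, hQfg⟩ := hTQ
  rcases hQfg with h | ⟨hfu, hvg⟩ | ⟨hfv, hug⟩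
  · exact Or.inl (hI i ⟨f, hf, g, hg, hfg, h⟩ j hpath)
  · exact main u v huv hdeg i f g hf hg hfu (P.iseqv.symm hvg) j hpath
  · have h := main v u (fun h => huv (P.iseqv.symm h))
      (by rw [mergeSetoid_comm]; exact hdeg) i f g hf hg hfv (P.iseqv.symm hug) j hpath
    rw [mergeSetoid_comm]
    exact h

lemma inv_chain :
    ∀ (l : List (Setoid V)) (p0 : Setoid V), Inv x y a b Arc p0 →
      List.Chain MergeStep p0 l → (∀ q ∈ l, (G.quot q).RedDegLE 4) →
      ∀ q ∈ l, Inv x y a b Arc q := by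
  intro l
  induction l with
  | nil => intro p0 _ _ _ q hq; cases hq
  | cons h t ih =>
    intro p0 h0 hc hdeg q hq
    have hc : MergeStep p0 h ∧ List.Chain MergeStep h t := List.isChain_cons_cons.mp hc
    obtain ⟨⟨u, v, huv, rfl⟩, hct⟩ := hc
    have hh := inv_step hxy hF harc huv (hdeg _ List.mem_cons_self) h0
    rcases List.mem_cons.mp hq with rfl | hq'
    · exact hh
    · exact ih _ hh hct (fun r hr => hdeg r (List.mem_cons_of_mem _ hr)) q hq'

omit hxy hF harc in
lemma inv_bot : Inv x y a b Arc (⊥ : Setoid V) := by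
  intro i hT j hpath
  obtain ⟨f, _, g, _, hfg, hr⟩ := hT
  exact absurd (hr : f = g) hfg

end Family

end WireProof
theorem wire_forces_all_ancestor_contractions {V : Type} [Fintype V] (G : Trigraph V)
    {ι : Type}
    -- a family of pairwise disjoint vertical sets …
    (x y : ι → V) (a b : ι → Fin 6 → V) (X : ι → Set V)
    -- … connected by propagation gadgets recorded by the propagation digraph `Arc`
    (Arc : ι → ι → Prop)
    (hxy : ∀ i, x i ≠ y i)
    (hF : ∀ i, FenceAttached G (a i) (b i) {x i, y i} (X i))
    (hdisj : ∀ i j, i ≠ j → Disjoint (verticalSet (x i) (y i) (a i) (b i))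
        (verticalSet (x j) (y j) (a j) (b j)))
    -- for each arc from `V^i` to `V^j`, the vertex `x^j` lies in the set `X` of the
    -- fence of `V^i` and `y^j` lies in its set `Y`
    (harc : ∀ i j, Arc i j → x j ∈ X i ∧
        y j ∉ fenceSet (a i) (b i) ∪ {x i, y i} ∪ X i)
    (L : List (Setoid V)) (P Q : Setoid V) (u v : V) (huv : ¬ P.r u v)
    (hQ : Q = Trigraph.mergeSetoid P u v)
    (hL : G.IsPartialSeq 4 (L ++ [Q])) (hP : L.getLast? = some P)
    (k : ι)
    -- the contraction from `P` to `Q` involves a pair of vertices of `V^k`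
    (hinv : ∃ f ∈ verticalSet (x k) (y k) (a k) (b k),
            ∃ g ∈ verticalSet (x k) (y k) (a k) (b k),
        (P.r f u ∧ P.r g v) ∨ (P.r f v ∧ P.r g u)) :
    -- then for every vertical set `V^i` with a directed path to `V^k` in the
    -- propagation digraph, the vertical pair of `V^i` lies in a common part
    -- (possibly merged by this very contraction)
    ∀ i, Relation.ReflTransGen Arc i k → Q.r (x i) (y i) := by
  obtain ⟨⟨hhead, hchain⟩, hdeg⟩ := hL
  -- `L` starts with the discrete partition
  cases L with
  | nil => simp at hP
  | cons p0 L0 =>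
    have hp0 : p0 = ⊥ := by
      simpa using hhead
    subst hp0
    have hchain' : List.Chain Trigraph.MergeStep ⊥ (L0 ++ [Q]) := hchain
    have hQmem : Q ∈ L0 ++ [Q] :=
      List.mem_append_right _ (List.mem_singleton.mpr rfl)
    have hInvQ : WireProof.Inv x y a b Arc Q :=
      WireProof.inv_chain hxy hF harc (L0 ++ [Q]) ⊥ (WireProof.inv_bot)
        hchain' (fun q hq => hdeg q (List.mem_cons_of_mem _ hq)) Q hQmem
    -- the contraction touches `V^k` in `Q`
    obtain ⟨f, hf, g, hg, hor⟩ := hinv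
    have hfg : f ≠ g := by
      rintro rfl
      rcases hor with ⟨h1, h2⟩ | ⟨h1, h2⟩
      · exact huv (P.iseqv.trans (P.iseqv.symm h1) h2)
      · exact huv (P.iseqv.trans (P.iseqv.symm h2) h1)
    have hQfg : Q.r f g := by
      subst hQ
      rcases hor with ⟨h1, h2⟩ | ⟨h1, h2⟩
      · exact Or.inr (Or.inl ⟨h1, P.iseqv.symm h2⟩)
      · exact Or.inr (Or.inr ⟨h1, P.iseqv.symm h2⟩)
    intro i hpath
    exact hInvQ k ⟨f, hf, g, hg, hfg, hQfg⟩ i hpath
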